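/- arXiv:2010.11044 — 3 statements merged into one kernel-verified Lean document; each statement's English description precedes it below -/
import Mathlib

section
/- For every integer q with 1 ≤ q ≤ 5 there exists η ∈ [0,1) such that Re(δ(ζ)/(1−ηζ)) > 0 for every complex ζ with |ζ| < 1, where δ(ζ) = Σ_{ℓ=1}^q (1/ℓ)(1−ζ)^ℓ is the generating polynomial of the q-step BDF method. -/
lemma no_denom_pos (η : ℝ) (hη0 : 0 ≤ η) (hη1 : η < 1) (ζ : ℂ) (h : ‖ζ‖ < 1) :
    0 < Complex.normSq (1 - (η : ℂ) * ζ) := by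
  have hne : (1 : ℂ) - (η : ℂ) * ζ ≠ 0 := by
    intro hz
    have h1 : (1 : ℂ) = (η : ℂ) * ζ := by linear_combination hz
    have := congrArg norm h1
    rw [norm_mul, Complex.norm_real, norm_one, Real.norm_of_nonneg hη0] at this
    nlinarith [norm_nonneg ζ]
  exact Complex.normSq_pos.mpr hne

lemma no_sq_lt (ζ : ℂ) (h : ‖ζ‖ < 1) : ζ.re ^ 2 + ζ.im ^ 2 < 1 := by
  have h2 : Complex.normSq ζ < 1 := by
    rw [← Complex.sq_norm]
    nlinarith [norm_nonneg ζ, h]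
  simpa [Complex.normSq_apply, sq] using h2

set_option maxHeartbeats 2000000 in
/-- The Nevanlinna–Odeh multiplier lemma for the BDF methods of orders 1 to 5. -/
theorem nevanlinna_odeh_multiplier (q : ℕ) (hq1 : 1 ≤ q) (hq5 : q ≤ 5) :
    ∃ η : ℝ, η ∈ Set.Ico (0 : ℝ) 1 ∧
      ∀ ζ : ℂ, ‖ζ‖ < 1 →
        0 < ((∑ ℓ ∈ Finset.Icc 1 q, (ℓ : ℂ)⁻¹ * (1 - ζ) ^ ℓ) / (1 - (η : ℂ) * ζ)).re := by
  interval_cases q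
  · -- q = 1
    refine ⟨0, ⟨le_refl _, by norm_num⟩, fun ζ h => ?_⟩
    rw [Complex.div_re, ← add_div]
    refine div_pos ?_ (no_denom_pos 0 (by norm_num) (by norm_num) ζ h)
    have hab := no_sq_lt ζ h
    obtain ⟨a, b⟩ := ζ
    rw [show (Finset.Icc 1 1 : Finset ℕ) = {1} by rfl]
    norm_num [Complex.add_re, Complex.add_im, Complex.mul_re, Complex.mul_im,
      Complex.sub_re, Complex.sub_im, Complex.one_re, Complex.one_im,
      Complex.ofReal_re, Complex.ofReal_im, pow_succ]
    nlinarith [sq_nonneg b, hab]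
  · -- q = 2
    refine ⟨0, ⟨le_refl _, by norm_num⟩, fun ζ h => ?_⟩
    rw [Complex.div_re, ← add_div]
    refine div_pos ?_ (no_denom_pos 0 (by norm_num) (by norm_num) ζ h)
    have hab := no_sq_lt ζ h
    obtain ⟨a, b⟩ := ζ
    rw [show (Finset.Icc 1 2 : Finset ℕ) = {1, 2} by rfl]
    norm_num [Finset.sum_insert, Finset.mem_insert, Complex.add_re, Complex.add_im,
      Complex.mul_re, Complex.mul_im, Complex.sub_re, Complex.sub_im, Complex.one_re,
      Complex.one_im, Complex.ofReal_re, Complex.ofReal_im, pow_succ]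
    nlinarith [sq_nonneg (1 - a), sq_nonneg b, hab]
  · -- q = 3
    refine ⟨1/5, ⟨by norm_num, by norm_num⟩, fun ζ h => ?_⟩
    rw [Complex.div_re, ← add_div]
    refine div_pos ?_ (no_denom_pos (1/5) (by norm_num) (by norm_num) ζ h)
    have hab := no_sq_lt ζ h
    obtain ⟨a, b⟩ := ζ
    rw [show (Finset.Icc 1 3 : Finset ℕ) = {1, 2, 3} by rfl]
    norm_num [Finset.sum_insert, Finset.mem_insert, Complex.add_re, Complex.add_im,
      Complex.mul_re, Complex.mul_im, Complex.sub_re, Complex.sub_im, Complex.one_re,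
      Complex.one_im, Complex.ofReal_re, Complex.ofReal_im, pow_succ]
    ring_nf
    nlinarith [sq_nonneg (1-a), sq_nonneg b, sq_nonneg ((1-a)^2 - b^2), sq_nonneg ((1-a)*b),
      sq_nonneg (1 - a^2 - b^2), mul_pos (sub_pos.2 hab) (sub_pos.2 hab), hab]
  · -- q = 4
    refine ⟨2/5, ⟨by norm_num, by norm_num⟩, fun ζ h => ?_⟩
    rw [Complex.div_re, ← add_div]
    refine div_pos ?_ (no_denom_pos (2/5) (by norm_num) (by norm_num) ζ h)
    have hab := no_sq_lt ζ h
    obtain ⟨a, b⟩ := ζ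
    rw [show (Finset.Icc 1 4 : Finset ℕ) = {1, 2, 3, 4} by rfl]
    norm_num [Finset.sum_insert, Finset.mem_insert, Complex.add_re, Complex.add_im,
      Complex.mul_re, Complex.mul_im, Complex.sub_re, Complex.sub_im, Complex.one_re,
      Complex.one_im, Complex.ofReal_re, Complex.ofReal_im, pow_succ]
    ring_nf
    nlinarith [sq_nonneg (1-a), sq_nonneg b, sq_nonneg ((1-a)^2 - b^2), sq_nonneg ((1-a)*b),
      sq_nonneg (1 - a^2 - b^2), mul_pos (sub_pos.2 hab) (sub_pos.2 hab), hab,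
      sq_nonneg ((1-a)^2 - 3*b^2), sq_nonneg (b*(3*(1-a)^2 - b^2)), sq_nonneg ((1-a)^3 - 3*(1-a)*b^2),
      mul_nonneg (mul_nonneg (sub_pos.2 hab).le (sub_pos.2 hab).le) (sq_nonneg (1-a)),
      mul_nonneg (mul_nonneg (sub_pos.2 hab).le (sub_pos.2 hab).le) (sq_nonneg b),
      mul_nonneg (sub_pos.2 hab).le (sq_nonneg ((1-a)^2 - b^2)),
      mul_nonneg (sub_pos.2 hab).le (sq_nonneg ((1-a)*b)),
      mul_nonneg (sub_pos.2 hab).le (sq_nonneg (1-a)),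
      mul_nonneg (sub_pos.2 hab).le (sq_nonneg b)]
  · -- q = 5
    refine ⟨17/20, ⟨by norm_num, by norm_num⟩, fun ζ h => ?_⟩
    rw [Complex.div_re, ← add_div]
    refine div_pos ?_ (no_denom_pos (17/20) (by norm_num) (by norm_num) ζ h)
    have hab := no_sq_lt ζ h
    obtain ⟨a, b⟩ := ζ
    rw [show (Finset.Icc 1 5 : Finset ℕ) = {1, 2, 3, 4, 5} by rfl]
    norm_num [Finset.sum_insert, Finset.mem_insert, Complex.add_re, Complex.add_im,
      Complex.mul_re, Complex.mul_im, Complex.sub_re, Complex.sub_im, Complex.one_re,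
      Complex.one_im, Complex.ofReal_re, Complex.ofReal_im, pow_succ]
    have hs : (0:ℝ) < 1 - a^2 - b^2 := by nlinarith
    linarith [sq_nonneg (1*(1-a) + (-1415/2888)*(1-a)^2 + (217/2888)*b^2 + (-941/5776)*(1-a)^3 + (-795/2888)*(1-a)*b^2),
    sq_nonneg (1*(1-a)^2 + (-1448849/3831535)*b^2 + (-2813647/38315350)*(1-a)^3 + (-64513/103555)*(1-a)*b^2),
    sq_nonneg (1*b^2 + (-44732695981/67549618830)*(1-a)^3 + (-105165433/794701398)*(1-a)*b^2),
    sq_nonneg (1*(1-a)^3 + (-1062359391805495/945600429810047)*(1-a)*b^2),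
    sq_nonneg (1*(1-a)*b^2),
    sq_nonneg (1*b + (-305/2142)*(1-a)*b + (-307/714)*(1-a)^2*b + (-22/119)*b^3),
    sq_nonneg (1*(1-a)*b + (-44511/104393)*(1-a)^2*b + (-639144/1357109)*b^3),
    sq_nonneg (1*(1-a)^2*b + (-45802153/44879235)*b^3),
    sq_nonneg (1*b^3),
    mul_nonneg hs.le (sq_nonneg (1*1 + (269/63)*(1-a) + (85/63)*(1-a)^2 + (47/21)*b^2)),
    mul_nonneg hs.le (sq_nonneg (1*(1-a) + (3089/8077)*(1-a)^2 + (5793/16154)*b^2)),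
    mul_nonneg hs.le (sq_nonneg (1*(1-a)^2 + (2427908/4424691)*b^2)),
    mul_nonneg hs.le (sq_nonneg (1*b^2)),
    mul_nonneg hs.le (sq_nonneg (1*b + (403/530)*(1-a)*b)),
    mul_nonneg hs.le (sq_nonneg (1*(1-a)*b)), hs]
end

section
/- Let δ(ζ) = 3/2 − 2ζ + (1/2)ζ² be the generating polynomial of the 2-step BDF method. Then Re δ(ζ) > 0 for every complex ζ with |ζ| < 1. -/
/-- The Nevanlinna–Odeh multiplier property for BDF2 with multiplier parameter η = 0:
the generating polynomial δ(ζ) = 3/2 − 2ζ + (1/2)ζ² of the 2-step BDF method has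
positive real part on the open unit disc. -/
theorem bdf2_positive_real_part (ζ : ℂ) (hζ : ‖ζ‖ < 1) :
    0 < ((3 / 2 : ℂ) - 2 * ζ + (1 / 2 : ℂ) * ζ ^ 2).re := by
  have h : ζ.re ^ 2 + ζ.im ^ 2 < 1 := by
    have := Complex.normSq_eq_norm_sq ζ
    have h2 : ‖ζ‖ < 1 := hζ
    nlinarith [Complex.normSq_apply ζ, norm_nonneg ζ]
  simp [Complex.add_re, Complex.sub_re, Complex.mul_re, pow_two]
  nlinarith [sq_nonneg (1 - ζ.re)]
end

section
/- For every integer q with 1 ≤ q ≤ 5 there exist η ∈ [0,1) and a symmetric positive definite matrix G = (g_{ij}) ∈ ℝ^{q×q} such that for every real inner product space (E, ⟨·,·⟩) and all vectors w_0, …, w_q ∈ E one has ⟨Σ_{i=0}^q δ_i w_{q−i}, w_q − η w_{q−1}⟩ ≥ Σ_{i,j=1}^q g_{ij} ⟨w_i, w_j⟩ − Σ_{i,j=1}^q g_{ij} ⟨w_{i−1}, w_{j−1}⟩, where δ_0, …, δ_q are the q-step BDF coefficients. -/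
open RealInnerProductSpace

private lemma dno_aux_coeff (l j : ℕ) : (((1 : Polynomial ℝ) - Polynomial.X) ^ l).coeff j
    = (-1 : ℝ)^j * (l.choose j : ℝ) := by
  have h : (1 : Polynomial ℝ) - Polynomial.X
      = Polynomial.C (-1) * (Polynomial.X + Polynomial.C (-1)) := by
    simp [mul_add]; ring
  rw [h, mul_pow, ← Polynomial.C_pow, Polynomial.coeff_C_mul, Polynomial.coeff_X_add_C_pow]
  rcases le_or_gt j l with hj | hj
  · have hlj : l = (l - j) + j := (Nat.sub_add_cancel hj).symm
    rw [show (-1:ℝ)^l = (-1)^(l-j) * (-1)^j by rw [← pow_add, ← hlj]]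
    ring_nf
    rw [pow_mul]
    rw [show ((-1:ℝ)^(l-j))^2 = ((-1:ℝ)^2)^(l-j) by rw [← pow_mul, ← pow_mul, Nat.mul_comm]]
    norm_num
  · simp [Nat.choose_eq_zero_of_lt hj]

set_option maxHeartbeats 1600000 in
/-- Combination of Dahlquist's G-stability theorem with the Nevanlinna–Odeh multiplier
lemma for the BDF methods of orders 1 to 5. -/
theorem dahlquist_nevanlinna_odeh (q : ℕ) (hq1 : 1 ≤ q) (hq5 : q ≤ 5)
    (δ : ℕ → ℝ)
    (hδ : ∀ j, δ j =
      (∑ ℓ ∈ Finset.Icc 1 q,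
        Polynomial.C ((ℓ : ℝ)⁻¹) * ((1 : Polynomial ℝ) - Polynomial.X) ^ ℓ).coeff j) :
    ∃ η : ℝ, η ∈ Set.Ico (0 : ℝ) 1 ∧
      ∃ G : Matrix (Fin q) (Fin q) ℝ, G.IsSymm ∧ G.PosDef ∧
        ∀ (E : Type) [NormedAddCommGroup E] [InnerProductSpace ℝ E] (w : ℕ → E),
          (∑ i : Fin q, ∑ j : Fin q, G i j * ⟪w (i.val + 1), w (j.val + 1)⟫)
            - (∑ i : Fin q, ∑ j : Fin q, G i j * ⟪w i.val, w j.val⟫)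
          ≤ ⟪∑ i ∈ Finset.range (q + 1), δ i • w (q - i),
              w q - η • w (q - 1)⟫ := by
  interval_cases q
  · have hd0 : δ 0 = (1 : ℝ) := by
      have h := hδ 0
      simp only [Polynomial.finset_sum_coeff, Polynomial.coeff_C_mul, dno_aux_coeff] at h
      rw [show Finset.Icc (1:ℕ) 1 = {1} from rfl] at h
      norm_num [Finset.sum_insert, Finset.mem_insert, Nat.choose] at h
      linarith
    have hd1 : δ 1 = (-1 : ℝ) := by
      have h := hδ 1
      simp only [Polynomial.finset_sum_coeff, Polynomial.coeff_C_mul, dno_aux_coeff] at h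
      rw [show Finset.Icc (1:ℕ) 1 = {1} from rfl] at h
      norm_num [Finset.sum_insert, Finset.mem_insert, Nat.choose] at h
      linarith
    refine ⟨0, by norm_num, !![(1/2 : ℝ)], ?_, ?_, ?_⟩
    · ext i j
      fin_cases i <;> fin_cases j <;> simp [Matrix.transpose_apply]
    · rw [Matrix.posDef_iff_dotProduct_mulVec]; constructor
      · ext i j
        fin_cases i <;> fin_cases j <;> simp [Matrix.conjTranspose_apply]
      · intro x hx
        simp only [dotProduct, Matrix.mulVec, Fin.sum_univ_one, Matrix.cons_val_zero,
          Matrix.cons_val_one, Matrix.head_cons, Pi.star_apply, star_trivial,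
          Matrix.cons_val', Matrix.head_fin_const, Matrix.empty_val', Matrix.of_apply,
          Matrix.cons_val_fin_one, Matrix.cons_val_two, Matrix.cons_val_three,
          Matrix.cons_val_four, Matrix.tail_cons, Matrix.head_fin_const]
        by_cases h0 : x 0 = 0
        · exact absurd (funext fun i => by fin_cases i <;> simp [h0]) hx
        · nlinarith [mul_self_pos.mpr h0]
    · intro E _ _ w
      simp only [Fin.sum_univ_one, Fin.val_zero, Fin.val_one,
        Matrix.cons_val_zero, Matrix.cons_val_one, Matrix.head_cons, Finset.sum_range_succ,
        Finset.sum_range_zero, hd0, hd1,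
        Matrix.cons_val', Matrix.head_fin_const, Matrix.empty_val', Matrix.of_apply,
        Matrix.cons_val_fin_one, Matrix.cons_val_two, Matrix.cons_val_three,
        Matrix.cons_val_four, Matrix.tail_cons]
      norm_num
      have c1 : (0:ℝ) ≤ ⟪(-1 : ℝ) • w 0 + (1 : ℝ) • w 1, (-1 : ℝ) • w 0 + (1 : ℝ) • w 1⟫ := real_inner_self_nonneg
      simp only [inner_add_left, inner_add_right, inner_sub_left, inner_sub_right,
        inner_neg_left, inner_neg_right, inner_zero_left, inner_zero_right,
        real_inner_smul_left, real_inner_smul_right, ← real_inner_self_eq_norm_sq] at c1 ⊢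
      linarith [c1, real_inner_comm (w 0) (w 1)]
  · have hd0 : δ 0 = (3/2 : ℝ) := by
      have h := hδ 0
      simp only [Polynomial.finset_sum_coeff, Polynomial.coeff_C_mul, dno_aux_coeff] at h
      rw [show Finset.Icc (1:ℕ) 2 = {1,2} from rfl] at h
      norm_num [Finset.sum_insert, Finset.mem_insert, Nat.choose] at h
      linarith
    have hd1 : δ 1 = (-2 : ℝ) := by
      have h := hδ 1
      simp only [Polynomial.finset_sum_coeff, Polynomial.coeff_C_mul, dno_aux_coeff] at h
      rw [show Finset.Icc (1:ℕ) 2 = {1,2} from rfl] at h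
      norm_num [Finset.sum_insert, Finset.mem_insert, Nat.choose] at h
      linarith
    have hd2 : δ 2 = (1/2 : ℝ) := by
      have h := hδ 2
      simp only [Polynomial.finset_sum_coeff, Polynomial.coeff_C_mul, dno_aux_coeff] at h
      rw [show Finset.Icc (1:ℕ) 2 = {1,2} from rfl] at h
      norm_num [Finset.sum_insert, Finset.mem_insert, Nat.choose] at h
      linarith
    refine ⟨1/10, by norm_num, !![(14117/81920 : ℝ), (-32549/81920 : ℝ); (-32549/81920 : ℝ), (17569/16384 : ℝ)], ?_, ?_, ?_⟩
    · ext i j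
      fin_cases i <;> fin_cases j <;> simp [Matrix.transpose_apply]
    · rw [Matrix.posDef_iff_dotProduct_mulVec]; constructor
      · ext i j
        fin_cases i <;> fin_cases j <;> simp [Matrix.conjTranspose_apply]
      · intro x hx
        simp only [dotProduct, Matrix.mulVec, Fin.sum_univ_two, Matrix.cons_val_zero,
          Matrix.cons_val_one, Matrix.head_cons, Pi.star_apply, star_trivial,
          Matrix.cons_val', Matrix.head_fin_const, Matrix.empty_val', Matrix.of_apply,
          Matrix.cons_val_fin_one, Matrix.cons_val_two, Matrix.cons_val_three,
          Matrix.cons_val_four, Matrix.tail_cons, Matrix.head_fin_const]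
        by_cases h1 : x 1 = 0
        · by_cases h0 : x 0 = 0
          · exact absurd (funext fun i => by fin_cases i <;> simp [h0, h1]) hx
          · rw [h1]
            nlinarith [mul_self_pos.mpr h0]
        · nlinarith [sq_nonneg (x 0 + (-32549/14117 : ℝ) * x 1), mul_self_pos.mpr h1]
    · intro E _ _ w
      simp only [Fin.sum_univ_two, Fin.val_zero, Fin.val_one,
        Matrix.cons_val_zero, Matrix.cons_val_one, Matrix.head_cons, Finset.sum_range_succ,
        Finset.sum_range_zero, hd0, hd1, hd2,
        Matrix.cons_val', Matrix.head_fin_const, Matrix.empty_val', Matrix.of_apply,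
        Matrix.cons_val_fin_one, Matrix.cons_val_two, Matrix.cons_val_three,
        Matrix.cons_val_four, Matrix.tail_cons]
      norm_num
      have c1 : (0:ℝ) ≤ ⟪(-1 : ℝ) • w 0 + (34597/14117 : ℝ) • w 1 + (-20480/14117 : ℝ) • w 2, (-1 : ℝ) • w 0 + (34597/14117 : ℝ) • w 1 + (-20480/14117 : ℝ) • w 2⟫ := real_inner_self_nonneg
      have c2 : (0:ℝ) ≤ ⟪(0 : ℝ) • w 0 + (-1 : ℝ) • w 1 + (1 : ℝ) • w 2, (0 : ℝ) • w 0 + (-1 : ℝ) • w 1 + (1 : ℝ) • w 2⟫ := real_inner_self_nonneg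
      simp only [inner_add_left, inner_add_right, inner_sub_left, inner_sub_right,
        inner_neg_left, inner_neg_right, inner_zero_left, inner_zero_right,
        real_inner_smul_left, real_inner_smul_right, ← real_inner_self_eq_norm_sq] at c1 c2 ⊢
      linarith [c1, c2, real_inner_comm (w 0) (w 1), real_inner_comm (w 0) (w 2), real_inner_comm (w 1) (w 2)]
  · have hd0 : δ 0 = (11/6 : ℝ) := by
      have h := hδ 0
      simp only [Polynomial.finset_sum_coeff, Polynomial.coeff_C_mul, dno_aux_coeff] at h
      rw [show Finset.Icc (1:ℕ) 3 = {1,2,3} from rfl] at h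
      norm_num [Finset.sum_insert, Finset.mem_insert, Nat.choose] at h
      linarith
    have hd1 : δ 1 = (-3 : ℝ) := by
      have h := hδ 1
      simp only [Polynomial.finset_sum_coeff, Polynomial.coeff_C_mul, dno_aux_coeff] at h
      rw [show Finset.Icc (1:ℕ) 3 = {1,2,3} from rfl] at h
      norm_num [Finset.sum_insert, Finset.mem_insert, Nat.choose] at h
      linarith
    have hd2 : δ 2 = (3/2 : ℝ) := by
      have h := hδ 2
      simp only [Polynomial.finset_sum_coeff, Polynomial.coeff_C_mul, dno_aux_coeff] at h
      rw [show Finset.Icc (1:ℕ) 3 = {1,2,3} from rfl] at h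
      norm_num [Finset.sum_insert, Finset.mem_insert, Nat.choose] at h
      linarith
    have hd3 : δ 3 = (-1/3 : ℝ) := by
      have h := hδ 3
      simp only [Polynomial.finset_sum_coeff, Polynomial.coeff_C_mul, dno_aux_coeff] at h
      rw [show Finset.Icc (1:ℕ) 3 = {1,2,3} from rfl] at h
      norm_num [Finset.sum_insert, Finset.mem_insert, Nat.choose] at h
      linarith
    refine ⟨1/2, by norm_num, !![(8105/196608 : ℝ), (-5591/49152 : ℝ), (30643/196608 : ℝ); (-5591/49152 : ℝ), (89683/196608 : ℝ), (-124663/196608 : ℝ); (30643/196608 : ℝ), (-124663/196608 : ℝ), (46033/49152 : ℝ)], ?_, ?_, ?_⟩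
    · ext i j
      fin_cases i <;> fin_cases j <;> simp [Matrix.transpose_apply]
    · rw [Matrix.posDef_iff_dotProduct_mulVec]; constructor
      · ext i j
        fin_cases i <;> fin_cases j <;> simp [Matrix.conjTranspose_apply]
      · intro x hx
        simp only [dotProduct, Matrix.mulVec, Fin.sum_univ_three, Matrix.cons_val_zero,
          Matrix.cons_val_one, Matrix.head_cons, Pi.star_apply, star_trivial,
          Matrix.cons_val', Matrix.head_fin_const, Matrix.empty_val', Matrix.of_apply,
          Matrix.cons_val_fin_one, Matrix.cons_val_two, Matrix.cons_val_three,
          Matrix.cons_val_four, Matrix.tail_cons, Matrix.head_fin_const]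
        by_cases h2 : x 2 = 0
        · by_cases h1 : x 1 = 0
          · by_cases h0 : x 0 = 0
            · exact absurd (funext fun i => by fin_cases i <;> simp [h0, h1, h2]) hx
            · rw [h1, h2]
              nlinarith [mul_self_pos.mpr h0]
          · rw [h2]
            nlinarith [sq_nonneg (x 0 + (-22364/8105 : ℝ) * x 1), mul_self_pos.mpr h1]
        · nlinarith [sq_nonneg (x 0 + (-22364/8105 : ℝ) * x 1 + (30643/8105 : ℝ) * x 2), sq_nonneg (x 1 + (-325093563/226732219 : ℝ) * x 2), mul_self_pos.mpr h2]
    · intro E _ _ w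
      simp only [Fin.sum_univ_three, Fin.val_zero, Fin.val_one, Fin.val_two,
        Matrix.cons_val_zero, Matrix.cons_val_one, Matrix.head_cons, Finset.sum_range_succ,
        Finset.sum_range_zero, hd0, hd1, hd2, hd3,
        Matrix.cons_val', Matrix.head_fin_const, Matrix.empty_val', Matrix.of_apply,
        Matrix.cons_val_fin_one, Matrix.cons_val_two, Matrix.cons_val_three,
        Matrix.cons_val_four, Matrix.tail_cons]
      norm_num
      have c1 : (0:ℝ) ≤ ⟪(-1 : ℝ) • w 0 + (22364/8105 : ℝ) • w 1 + (-47027/8105 : ℝ) • w 2 + (32768/8105 : ℝ) • w 3, (-1 : ℝ) • w 0 + (22364/8105 : ℝ) • w 1 + (-47027/8105 : ℝ) • w 2 + (32768/8105 : ℝ) • w 3⟫ := real_inner_self_nonneg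
      have c2 : (0:ℝ) ≤ ⟪(0 : ℝ) • w 0 + (-1 : ℝ) • w 1 + (41665223/17893466 : ℝ) • w 2 + (-23771757/17893466 : ℝ) • w 3, (0 : ℝ) • w 0 + (-1 : ℝ) • w 1 + (41665223/17893466 : ℝ) • w 2 + (-23771757/17893466 : ℝ) • w 3⟫ := real_inner_self_nonneg
      have c3 : (0:ℝ) ≤ ⟪(0 : ℝ) • w 0 + (0 : ℝ) • w 1 + (-1 : ℝ) • w 2 + (1 : ℝ) • w 3, (0 : ℝ) • w 0 + (0 : ℝ) • w 1 + (-1 : ℝ) • w 2 + (1 : ℝ) • w 3⟫ := real_inner_self_nonneg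
      simp only [inner_add_left, inner_add_right, inner_sub_left, inner_sub_right,
        inner_neg_left, inner_neg_right, inner_zero_left, inner_zero_right,
        real_inner_smul_left, real_inner_smul_right, ← real_inner_self_eq_norm_sq] at c1 c2 c3 ⊢
      linarith [c1, c2, c3, real_inner_comm (w 0) (w 1), real_inner_comm (w 0) (w 2), real_inner_comm (w 0) (w 3), real_inner_comm (w 1) (w 2), real_inner_comm (w 1) (w 3), real_inner_comm (w 2) (w 3)]
  · have hd0 : δ 0 = (25/12 : ℝ) := by
      have h := hδ 0
      simp only [Polynomial.finset_sum_coeff, Polynomial.coeff_C_mul, dno_aux_coeff] at h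
      rw [show Finset.Icc (1:ℕ) 4 = {1,2,3,4} from rfl] at h
      norm_num [Finset.sum_insert, Finset.mem_insert, Nat.choose] at h
      linarith
    have hd1 : δ 1 = (-4 : ℝ) := by
      have h := hδ 1
      simp only [Polynomial.finset_sum_coeff, Polynomial.coeff_C_mul, dno_aux_coeff] at h
      rw [show Finset.Icc (1:ℕ) 4 = {1,2,3,4} from rfl] at h
      norm_num [Finset.sum_insert, Finset.mem_insert, Nat.choose] at h
      linarith
    have hd2 : δ 2 = (3 : ℝ) := by
      have h := hδ 2
      simp only [Polynomial.finset_sum_coeff, Polynomial.coeff_C_mul, dno_aux_coeff] at h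
      rw [show Finset.Icc (1:ℕ) 4 = {1,2,3,4} from rfl] at h
      norm_num [Finset.sum_insert, Finset.mem_insert, Nat.choose] at h
      linarith
    have hd3 : δ 3 = (-4/3 : ℝ) := by
      have h := hδ 3
      simp only [Polynomial.finset_sum_coeff, Polynomial.coeff_C_mul, dno_aux_coeff] at h
      rw [show Finset.Icc (1:ℕ) 4 = {1,2,3,4} from rfl] at h
      norm_num [Finset.sum_insert, Finset.mem_insert, Nat.choose] at h
      linarith
    have hd4 : δ 4 = (1/4 : ℝ) := by
      have h := hδ 4
      simp only [Polynomial.finset_sum_coeff, Polynomial.coeff_C_mul, dno_aux_coeff] at h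
      rw [show Finset.Icc (1:ℕ) 4 = {1,2,3,4} from rfl] at h
      norm_num [Finset.sum_insert, Finset.mem_insert, Nat.choose] at h
      linarith
    refine ⟨3/5, by norm_num, !![(10081/327680 : ℝ), (-79483/983040 : ℝ), (65149/491520 : ℝ), (-13021/98304 : ℝ); (-79483/983040 : ℝ), (89909/245760 : ℝ), (-105901/163840 : ℝ), (37883/65536 : ℝ); (65149/491520 : ℝ), (-105901/163840 : ℝ), (1334261/983040 : ℝ), (-80399/65536 : ℝ); (-13021/98304 : ℝ), (37883/65536 : ℝ), (-80399/65536 : ℝ), (117755/98304 : ℝ)], ?_, ?_, ?_⟩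
    · ext i j
      fin_cases i <;> fin_cases j <;> simp [Matrix.transpose_apply]
    · rw [Matrix.posDef_iff_dotProduct_mulVec]; constructor
      · ext i j
        fin_cases i <;> fin_cases j <;> simp [Matrix.conjTranspose_apply]
      · intro x hx
        simp only [dotProduct, Matrix.mulVec, Fin.sum_univ_four, Matrix.cons_val_zero,
          Matrix.cons_val_one, Matrix.head_cons, Pi.star_apply, star_trivial,
          Matrix.cons_val', Matrix.head_fin_const, Matrix.empty_val', Matrix.of_apply,
          Matrix.cons_val_fin_one, Matrix.cons_val_two, Matrix.cons_val_three,
          Matrix.cons_val_four, Matrix.tail_cons, Matrix.head_fin_const]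
        by_cases h3 : x 3 = 0
        · by_cases h2 : x 2 = 0
          · by_cases h1 : x 1 = 0
            · by_cases h0 : x 0 = 0
              · exact absurd (funext fun i => by fin_cases i <;> simp [h0, h1, h2, h3]) hx
              · rw [h1, h2, h3]
                nlinarith [mul_self_pos.mpr h0]
            · rw [h2, h3]
              nlinarith [sq_nonneg (x 0 + (-79483/30243 : ℝ) * x 1), mul_self_pos.mpr h1]
          · rw [h3]
            nlinarith [sq_nonneg (x 0 + (-79483/30243 : ℝ) * x 1 + (130298/30243 : ℝ) * x 2), sq_nonneg (x 1 + (-8860107724/4558924259 : ℝ) * x 2), mul_self_pos.mpr h2]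
        · nlinarith [sq_nonneg (x 0 + (-79483/30243 : ℝ) * x 1 + (130298/30243 : ℝ) * x 2 + (-130210/30243 : ℝ) * x 3), sq_nonneg (x 1 + (-8860107724/4558924259 : ℝ) * x 2 + (6835952105/4558924259 : ℝ) * x 3), sq_nonneg (x 2 + (-187556737783087/185570249037103 : ℝ) * x 3), mul_self_pos.mpr h3]
    · intro E _ _ w
      simp only [Fin.sum_univ_four, Fin.val_zero, Fin.val_one, Fin.val_two, show ((3:Fin 4):ℕ) = 3 from rfl,
        Matrix.cons_val_zero, Matrix.cons_val_one, Matrix.head_cons, Finset.sum_range_succ,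
        Finset.sum_range_zero, hd0, hd1, hd2, hd3, hd4,
        Matrix.cons_val', Matrix.head_fin_const, Matrix.empty_val', Matrix.of_apply,
        Matrix.cons_val_fin_one, Matrix.cons_val_two, Matrix.cons_val_three,
        Matrix.cons_val_four, Matrix.tail_cons]
      norm_num
      have c1 : (0:ℝ) ≤ ⟪(-1 : ℝ) • w 0 + (79483/30243 : ℝ) • w 1 + (-130298/30243 : ℝ) • w 2 + (203938/30243 : ℝ) • w 3 + (-40960/10081 : ℝ) • w 4, (-1 : ℝ) • w 0 + (79483/30243 : ℝ) • w 1 + (-130298/30243 : ℝ) • w 2 + (203938/30243 : ℝ) • w 3 + (-40960/10081 : ℝ) • w 4⟫ := real_inner_self_nonneg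
      have c2 : (0:ℝ) ≤ ⟪(0 : ℝ) • w 0 + (-1 : ℝ) • w 1 + (8666179/4891658 : ℝ) • w 2 + (-1785451711/728857042 : ℝ) • w 3 + (611524041/364428521 : ℝ) • w 4, (0 : ℝ) • w 0 + (-1 : ℝ) • w 1 + (8666179/4891658 : ℝ) • w 2 + (-1785451711/728857042 : ℝ) • w 3 + (611524041/364428521 : ℝ) • w 4⟫ := real_inner_self_nonneg
      have c3 : (0:ℝ) ≤ ⟪(0 : ℝ) • w 0 + (0 : ℝ) • w 1 + (-1 : ℝ) • w 2 + (12513157791/8163297691 : ℝ) • w 3 + (-4349860100/8163297691 : ℝ) • w 4, (0 : ℝ) • w 0 + (0 : ℝ) • w 1 + (-1 : ℝ) • w 2 + (12513157791/8163297691 : ℝ) • w 3 + (-4349860100/8163297691 : ℝ) • w 4⟫ := real_inner_self_nonneg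
      have c4 : (0:ℝ) ≤ ⟪(0 : ℝ) • w 0 + (0 : ℝ) • w 1 + (0 : ℝ) • w 2 + (-1 : ℝ) • w 3 + (1 : ℝ) • w 4, (0 : ℝ) • w 0 + (0 : ℝ) • w 1 + (0 : ℝ) • w 2 + (-1 : ℝ) • w 3 + (1 : ℝ) • w 4⟫ := real_inner_self_nonneg
      simp only [inner_add_left, inner_add_right, inner_sub_left, inner_sub_right,
        inner_neg_left, inner_neg_right, inner_zero_left, inner_zero_right,
        real_inner_smul_left, real_inner_smul_right, ← real_inner_self_eq_norm_sq] at c1 c2 c3 c4 ⊢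
      linarith [c1, c2, c3, c4, real_inner_comm (w 0) (w 1), real_inner_comm (w 0) (w 2), real_inner_comm (w 0) (w 3), real_inner_comm (w 0) (w 4), real_inner_comm (w 1) (w 2), real_inner_comm (w 1) (w 3), real_inner_comm (w 1) (w 4), real_inner_comm (w 2) (w 3), real_inner_comm (w 2) (w 4), real_inner_comm (w 3) (w 4)]
  · have hd0 : δ 0 = (137/60 : ℝ) := by
      have h := hδ 0
      simp only [Polynomial.finset_sum_coeff, Polynomial.coeff_C_mul, dno_aux_coeff] at h
      rw [show Finset.Icc (1:ℕ) 5 = {1,2,3,4,5} from rfl] at h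
      norm_num [Finset.sum_insert, Finset.mem_insert, Nat.choose] at h
      linarith
    have hd1 : δ 1 = (-5 : ℝ) := by
      have h := hδ 1
      simp only [Polynomial.finset_sum_coeff, Polynomial.coeff_C_mul, dno_aux_coeff] at h
      rw [show Finset.Icc (1:ℕ) 5 = {1,2,3,4,5} from rfl] at h
      norm_num [Finset.sum_insert, Finset.mem_insert, Nat.choose] at h
      linarith
    have hd2 : δ 2 = (5 : ℝ) := by
      have h := hδ 2
      simp only [Polynomial.finset_sum_coeff, Polynomial.coeff_C_mul, dno_aux_coeff] at h
      rw [show Finset.Icc (1:ℕ) 5 = {1,2,3,4,5} from rfl] at h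
      norm_num [Finset.sum_insert, Finset.mem_insert, Nat.choose] at h
      linarith
    have hd3 : δ 3 = (-10/3 : ℝ) := by
      have h := hδ 3
      simp only [Polynomial.finset_sum_coeff, Polynomial.coeff_C_mul, dno_aux_coeff] at h
      rw [show Finset.Icc (1:ℕ) 5 = {1,2,3,4,5} from rfl] at h
      norm_num [Finset.sum_insert, Finset.mem_insert, Nat.choose] at h
      linarith
    have hd4 : δ 4 = (5/4 : ℝ) := by
      have h := hδ 4
      simp only [Polynomial.finset_sum_coeff, Polynomial.coeff_C_mul, dno_aux_coeff] at h
      rw [show Finset.Icc (1:ℕ) 5 = {1,2,3,4,5} from rfl] at h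
      norm_num [Finset.sum_insert, Finset.mem_insert, Nat.choose] at h
      linarith
    have hd5 : δ 5 = (-1/5 : ℝ) := by
      have h := hδ 5
      simp only [Polynomial.finset_sum_coeff, Polynomial.coeff_C_mul, dno_aux_coeff] at h
      rw [show Finset.Icc (1:ℕ) 5 = {1,2,3,4,5} from rfl] at h
      norm_num [Finset.sum_insert, Finset.mem_insert, Nat.choose] at h
      linarith
    refine ⟨9/10, by norm_num, !![(38407/1638400 : ℝ), (-32567/491520 : ℝ), (81281/614400 : ℝ), (-10643/76800 : ℝ), (19367/327680 : ℝ); (-32567/491520 : ℝ), (25043/61440 : ℝ), (-700053/819200 : ℝ), (3781/4096 : ℝ), (-22727/49152 : ℝ); (81281/614400 : ℝ), (-700053/819200 : ℝ), (255781/122880 : ℝ), (-2076153/819200 : ℝ), (21123/16384 : ℝ); (-10643/76800 : ℝ), (3781/4096 : ℝ), (-2076153/819200 : ℝ), (465391/122880 : ℝ), (-1780403/819200 : ℝ); (19367/327680 : ℝ), (-22727/49152 : ℝ), (21123/16384 : ℝ), (-1780403/819200 : ℝ), (1377773/983040 : ℝ)], ?_, ?_, ?_⟩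
    · ext i j
      fin_cases i <;> fin_cases j <;> simp [Matrix.transpose_apply]
    · rw [Matrix.posDef_iff_dotProduct_mulVec]; constructor
      · ext i j
        fin_cases i <;> fin_cases j <;> simp [Matrix.conjTranspose_apply]
      · intro x hx
        simp only [dotProduct, Matrix.mulVec, Fin.sum_univ_five, Matrix.cons_val_zero,
          Matrix.cons_val_one, Matrix.head_cons, Pi.star_apply, star_trivial,
          Matrix.cons_val', Matrix.head_fin_const, Matrix.empty_val', Matrix.of_apply,
          Matrix.cons_val_fin_one, Matrix.cons_val_two, Matrix.cons_val_three,
          Matrix.cons_val_four, Matrix.tail_cons, Matrix.head_fin_const]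
        by_cases h4 : x 4 = 0
        · by_cases h3 : x 3 = 0
          · by_cases h2 : x 2 = 0
            · by_cases h1 : x 1 = 0
              · by_cases h0 : x 0 = 0
                · exact absurd (funext fun i => by fin_cases i <;> simp [h0, h1, h2, h3, h4]) hx
                · rw [h1, h2, h3, h4]
                  nlinarith [mul_self_pos.mpr h0]
              · rw [h2, h3, h4]
                nlinarith [sq_nonneg (x 0 + (-325670/115221 : ℝ) * x 1), mul_self_pos.mpr h1]
            · rw [h3, h4]
              nlinarith [sq_nonneg (x 0 + (-325670/115221 : ℝ) * x 1 + (650248/115221 : ℝ) * x 2), sq_nonneg (x 1 + (-136099287059/62388705670 : ℝ) * x 2), mul_self_pos.mpr h2]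
          · rw [h4]
            nlinarith [sq_nonneg (x 0 + (-325670/115221 : ℝ) * x 1 + (650248/115221 : ℝ) * x 2 + (-681152/115221 : ℝ) * x 3), sq_nonneg (x 1 + (-136099287059/62388705670 : ℝ) * x 2 + (15047497468/6238870567 : ℝ) * x 3), sq_nonneg (x 2 + (-90930826592877850/43923324706289299 : ℝ) * x 3), mul_self_pos.mpr h3]
        · nlinarith [sq_nonneg (x 0 + (-325670/115221 : ℝ) * x 1 + (650248/115221 : ℝ) * x 2 + (-681152/115221 : ℝ) * x 3 + (96835/38407 : ℝ) * x 4), sq_nonneg (x 1 + (-136099287059/62388705670 : ℝ) * x 2 + (15047497468/6238870567 : ℝ) * x 3 + (-16725400335/12477741134 : ℝ) * x 4), sq_nonneg (x 2 + (-90930826592877850/43923324706289299 : ℝ) * x 3 + (47753190670896775/43923324706289299 : ℝ) * x 4), sq_nonneg (x 3 + (-25198850370372469661423/24756524902329421154031 : ℝ) * x 4), mul_self_pos.mpr h4]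
    · intro E _ _ w
      simp only [Fin.sum_univ_five, Fin.val_zero, Fin.val_one, Fin.val_two, show ((3:Fin 5):ℕ) = 3 from rfl, show ((4:Fin 5):ℕ) = 4 from rfl,
        Matrix.cons_val_zero, Matrix.cons_val_one, Matrix.head_cons, Finset.sum_range_succ,
        Finset.sum_range_zero, hd0, hd1, hd2, hd3, hd4, hd5,
        Matrix.cons_val', Matrix.head_fin_const, Matrix.empty_val', Matrix.of_apply,
        Matrix.cons_val_fin_one, Matrix.cons_val_two, Matrix.cons_val_three,
        Matrix.cons_val_four, Matrix.tail_cons]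
      norm_num
      have c1 : (0:ℝ) ≤ ⟪(-1 : ℝ) • w 0 + (325670/115221 : ℝ) • w 1 + (-650248/115221 : ℝ) • w 2 + (681152/115221 : ℝ) • w 3 + (-244291/38407 : ℝ) • w 4 + (163840/38407 : ℝ) • w 5, (-1 : ℝ) • w 0 + (325670/115221 : ℝ) • w 1 + (-650248/115221 : ℝ) • w 2 + (681152/115221 : ℝ) • w 3 + (-244291/38407 : ℝ) • w 4 + (163840/38407 : ℝ) • w 5⟫ := real_inner_self_nonneg
      have c2 : (0:ℝ) ≤ ⟪(0 : ℝ) • w 0 + (-1 : ℝ) • w 1 + (1081449544/513831947 : ℝ) • w 2 + (-32289674936/15928790357 : ℝ) • w 3 + (263268022998/111501532499 : ℝ) • w 4 + (-160413316995/111501532499 : ℝ) • w 5, (0 : ℝ) • w 0 + (-1 : ℝ) • w 1 + (1081449544/513831947 : ℝ) • w 2 + (-32289674936/15928790357 : ℝ) • w 3 + (263268022998/111501532499 : ℝ) • w 4 + (-160413316995/111501532499 : ℝ) • w 5⟫ := real_inner_self_nonneg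
      have c3 : (0:ℝ) ≤ ⟪(0 : ℝ) • w 0 + (0 : ℝ) • w 1 + (-1 : ℝ) • w 2 + (243051682323/232483590107 : ℝ) • w 3 + (-389787703911/464967180214 : ℝ) • w 4 + (368651519479/464967180214 : ℝ) • w 5, (0 : ℝ) • w 0 + (0 : ℝ) • w 1 + (-1 : ℝ) • w 2 + (243051682323/232483590107 : ℝ) • w 3 + (-389787703911/464967180214 : ℝ) • w 4 + (368651519479/464967180214 : ℝ) • w 5⟫ := real_inner_self_nonneg
      have c4 : (0:ℝ) ≤ ⟪(0 : ℝ) • w 0 + (0 : ℝ) • w 1 + (0 : ℝ) • w 2 + (-1 : ℝ) • w 3 + (990705648788406/1012947663123553 : ℝ) • w 4 + (22242014335147/1012947663123553 : ℝ) • w 5, (0 : ℝ) • w 0 + (0 : ℝ) • w 1 + (0 : ℝ) • w 2 + (-1 : ℝ) • w 3 + (990705648788406/1012947663123553 : ℝ) • w 4 + (22242014335147/1012947663123553 : ℝ) • w 5⟫ := real_inner_self_nonneg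
      have c5 : (0:ℝ) ≤ ⟪(0 : ℝ) • w 0 + (0 : ℝ) • w 1 + (0 : ℝ) • w 2 + (0 : ℝ) • w 3 + (-1 : ℝ) • w 4 + (1 : ℝ) • w 5, (0 : ℝ) • w 0 + (0 : ℝ) • w 1 + (0 : ℝ) • w 2 + (0 : ℝ) • w 3 + (-1 : ℝ) • w 4 + (1 : ℝ) • w 5⟫ := real_inner_self_nonneg
      simp only [inner_add_left, inner_add_right, inner_sub_left, inner_sub_right,
        inner_neg_left, inner_neg_right, inner_zero_left, inner_zero_right,
        real_inner_smul_left, real_inner_smul_right, ← real_inner_self_eq_norm_sq] at c1 c2 c3 c4 c5 ⊢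
      linarith [c1, c2, c3, c4, c5, real_inner_comm (w 0) (w 1), real_inner_comm (w 0) (w 2), real_inner_comm (w 0) (w 3), real_inner_comm (w 0) (w 4), real_inner_comm (w 0) (w 5), real_inner_comm (w 1) (w 2), real_inner_comm (w 1) (w 3), real_inner_comm (w 1) (w 4), real_inner_comm (w 1) (w 5), real_inner_comm (w 2) (w 3), real_inner_comm (w 2) (w 4), real_inner_comm (w 2) (w 5), real_inner_comm (w 3) (w 4), real_inner_comm (w 3) (w 5), real_inner_comm (w 4) (w 5)]
end
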